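/- Let p_1, p_2, p_3 ∈ ℝ³ be unit vectors and m_1, m_2, m_3 > 0. Set cos σ_ij = ⟪p_i, p_j⟫ (inner product), let I = Σ_k m_k (Id − p_k p_kᵀ) be the 3×3 inertia tensor, and let J be the 3×3 real symmetric matrix with diagonal entries (m_2+m_3, m_3+m_1, m_1+m_2) and off-diagonal entries J_{ij} = J_{ji} = −√(m_i m_j) cos σ_ij for i ≠ j. Then I and J have the same characteristic polynomial, and consequently (both being real symmetric matrices) J is similar to I, i.e., there is an invertible 3×3 matrix M with J = M⁻¹ I M. -/

import Mathlib

open Real Matrix Polynomial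

private lemma charpoly_conj_aux {n R : Type*} [DecidableEq n] [Fintype n] [CommRing R]
    (U V M : Matrix n n R) (hUV : U * V = 1) :
    (U * M * V).charpoly = M.charpoly := by
  have hUVc : U.map C * V.map C = 1 := by
    rw [← Matrix.map_mul, hUV, Matrix.map_one _ (map_zero C) (map_one C)]
  have hch : charmatrix (U * M * V) = U.map C * charmatrix M * V.map C := by
    rw [charmatrix, charmatrix]
    have hmaps : ((C : R →+* R[X]).mapMatrix (U * M * V) : Matrix n n R[X])
        = U.map C * M.map C * V.map C := by
      simp [Matrix.map_mul]
    rw [hmaps, Matrix.mul_sub, Matrix.sub_mul]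
    congr 1
    · symm
      have := (Matrix.scalar_commute (X : R[X]) (fun r' => Commute.all _ _) (U.map C)).symm
      calc U.map C * Matrix.scalar n (X : R[X]) * V.map C
          = Matrix.scalar n (X : R[X]) * (U.map C * V.map C) := by
            rw [this]; rw [Matrix.mul_assoc]
        _ = Matrix.scalar n (X : R[X]) := by rw [hUVc, mul_one]
  rw [Matrix.charpoly, Matrix.charpoly, hch, det_mul, det_mul, mul_comm (det (U.map C)),
    mul_assoc, ← det_mul, hUVc, det_one, mul_one]

private lemma exists_comp_perm_of_multiset_eq {n : ℕ} {α : Type*} [LinearOrder α]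
    (a b : Fin n → α)
    (h : Multiset.map a Finset.univ.val = Multiset.map b Finset.univ.val) :
    ∃ σ : Equiv.Perm (Fin n), b = a ∘ σ := by
  have hco : ∀ f : Fin n → α, Multiset.map f Finset.univ.val = (List.ofFn f : Multiset α) := by
    intro f
    rw [List.ofFn_eq_map]
    rfl
  have hperm : (List.ofFn a).Perm (List.ofFn b) := by
    rw [← Multiset.coe_eq_coe, ← hco, ← hco, h]
  have key : a ∘ Tuple.sort a = b ∘ Tuple.sort b := by
    apply List.ofFn_injective
    refine (fun h1 h2 h3 => List.Perm.eq_of_sortedLE h2 h3 h1) ?_ ?_ ?_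
    · exact ((Equiv.Perm.ofFn_comp_perm (Tuple.sort a) a).trans hperm).trans
        (Equiv.Perm.ofFn_comp_perm (Tuple.sort b) b).symm
    · exact (Tuple.monotone_sort a).sortedLE_ofFn
    · exact (Tuple.monotone_sort b).sortedLE_ofFn
  refine ⟨(Tuple.sort b).symm.trans (Tuple.sort a), funext fun x => ?_⟩
  have := congrFun key ((Tuple.sort b).symm x)
  simpa using this.symm

private lemma charpoly_eq_prod_eigenvalues {k : ℕ} (A : Matrix (Fin k) (Fin k) ℝ)
    (hA : A.IsHermitian) :
    A.charpoly = ∏ i, (X - C (hA.eigenvalues i)) := by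
  have hU1 : (hA.eigenvectorUnitary : Matrix (Fin k) (Fin k) ℝ) *
      star (hA.eigenvectorUnitary : Matrix (Fin k) (Fin k) ℝ) = 1 :=
    (Matrix.mem_unitaryGroup_iff).mp hA.eigenvectorUnitary.2
  have hdiag : Matrix.diagonal (RCLike.ofReal ∘ hA.eigenvalues)
      = Matrix.diagonal hA.eigenvalues := by
    rw [RCLike.ofReal_real_eq_id, Function.id_comp]
  calc A.charpoly
      = ((hA.eigenvectorUnitary : Matrix (Fin k) (Fin k) ℝ) *
          Matrix.diagonal hA.eigenvalues *
          star (hA.eigenvectorUnitary : Matrix (Fin k) (Fin k) ℝ)).charpoly := by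
        conv_lhs => rw [hA.spectral_theorem, Unitary.conjStarAlgAut_apply, hdiag]
    _ = (Matrix.diagonal hA.eigenvalues).charpoly := charpoly_conj_aux _ _ _ hU1
    _ = ∏ i, (X - C (hA.eigenvalues i)) := by
        rw [Matrix.charpoly_of_upperTriangular _ (Matrix.blockTriangular_diagonal _)]
        simp

private lemma similar_of_hermitian_of_charpoly_eq {k : ℕ} (I J : Matrix (Fin k) (Fin k) ℝ)
    (hIh : I.IsHermitian) (hJh : J.IsHermitian) (hcp : I.charpoly = J.charpoly) :
    ∃ M : Matrix (Fin k) (Fin k) ℝ, IsUnit M.det ∧ J = M⁻¹ * I * M := by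
  classical
  set U : Matrix (Fin k) (Fin k) ℝ := (hIh.eigenvectorUnitary : Matrix (Fin k) (Fin k) ℝ)
    with hUdef
  set V : Matrix (Fin k) (Fin k) ℝ := (hJh.eigenvectorUnitary : Matrix (Fin k) (Fin k) ℝ)
    with hVdef
  have hU1 : U * star U = 1 := (Matrix.mem_unitaryGroup_iff).mp hIh.eigenvectorUnitary.2
  have hU2 : star U * U = 1 := mul_eq_one_comm.mp hU1
  have hV1 : V * star V = 1 := (Matrix.mem_unitaryGroup_iff).mp hJh.eigenvectorUnitary.2
  have hV2 : star V * V = 1 := mul_eq_one_comm.mp hV1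
  have hdiagI : Matrix.diagonal (RCLike.ofReal ∘ hIh.eigenvalues) =
      Matrix.diagonal hIh.eigenvalues := by rw [RCLike.ofReal_real_eq_id, Function.id_comp]
  have hdiagJ : Matrix.diagonal (RCLike.ofReal ∘ hJh.eigenvalues) =
      Matrix.diagonal hJh.eigenvalues := by rw [RCLike.ofReal_real_eq_id, Function.id_comp]
  have hJdec : J = V * Matrix.diagonal hJh.eigenvalues * star V := by
    conv_lhs => rw [hJh.spectral_theorem, Unitary.conjStarAlgAut_apply]
    rw [hdiagJ]
  have hprod : ∏ i, (X - C (hIh.eigenvalues i)) = ∏ i, (X - C (hJh.eigenvalues i)) := by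
    rw [← charpoly_eq_prod_eigenvalues I hIh, ← charpoly_eq_prod_eigenvalues J hJh, hcp]
  have hmults : Multiset.map hIh.eigenvalues Finset.univ.val =
      Multiset.map hJh.eigenvalues Finset.univ.val := by
    have hr : ∀ f : Fin k → ℝ,
        (∏ i, (X - C (f i))).roots = Multiset.map f Finset.univ.val := by
      intro f
      rw [Finset.prod_eq_multiset_prod]
      rw [show Multiset.map (fun i => X - C (f i)) Finset.univ.val
          = Multiset.map (fun r => X - C r) (Multiset.map f Finset.univ.val) by
        rw [Multiset.map_map]; rfl]
      exact Polynomial.roots_multiset_prod_X_sub_C _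
    rw [← hr, ← hr, hprod]
  obtain ⟨σ, hσ⟩ := exists_comp_perm_of_multiset_eq hIh.eigenvalues hJh.eigenvalues hmults
  set P : Matrix (Fin k) (Fin k) ℝ := (1 : Matrix (Fin k) (Fin k) ℝ).submatrix σ.symm id
    with hPdef
  set Q : Matrix (Fin k) (Fin k) ℝ := (1 : Matrix (Fin k) (Fin k) ℝ).submatrix id σ.symm
    with hQdef
  have hQP : Q * P = 1 := by
    rw [hPdef, hQdef, Matrix.submatrix_mul_equiv, Matrix.one_mul, Matrix.submatrix_id_id]
  have hPQ : P * Q = 1 := mul_eq_one_comm.mp hQP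
  have hDJ : Matrix.diagonal hJh.eigenvalues =
      Q * (Matrix.diagonal hIh.eigenvalues * P) := by
    rw [hPdef, Matrix.mul_submatrix_one σ.symm id, hQdef,
      Matrix.one_submatrix_mul id σ.symm]
    simp only [Matrix.submatrix_submatrix, Function.comp_id, Function.id_comp,
      Equiv.symm_symm]
    rw [Matrix.submatrix_diagonal _ _ σ.injective, hσ]
  have hMN : (U * (P * star V)) * (V * (Q * star U)) = 1 := by
    calc (U * (P * star V)) * (V * (Q * star U))
        = U * (P * ((star V * V) * (Q * star U))) := by
          simp only [Matrix.mul_assoc]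
      _ = U * ((P * Q) * star U) := by rw [hV2, Matrix.one_mul, Matrix.mul_assoc]
      _ = 1 := by rw [hPQ, Matrix.one_mul, hU1]
  refine ⟨U * (P * star V), Matrix.isUnit_det_of_right_inverse hMN, ?_⟩
  have hinv : (U * (P * star V))⁻¹ = V * (Q * star U) :=
    Matrix.inv_eq_right_inv hMN
  rw [hinv]
  calc J = V * Matrix.diagonal hJh.eigenvalues * star V := hJdec
    _ = V * (Q * (Matrix.diagonal hIh.eigenvalues * P)) * star V := by rw [← hDJ]
    _ = V * (Q * ((star U * (I * U)) * P)) * star V := by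
        have hDI : star U * (I * U) = Matrix.diagonal hIh.eigenvalues := by
          conv_lhs => rw [hIh.spectral_theorem]
          rw [Unitary.conjStarAlgAut_apply, hdiagI]
          show star U * (U * Matrix.diagonal hIh.eigenvalues * star U * U) = _
          rw [Matrix.mul_assoc, Matrix.mul_assoc, hU2, Matrix.mul_one, ← Matrix.mul_assoc, hU2,
            Matrix.one_mul]
        rw [hDI]
    _ = V * (Q * star U) * I * (U * (P * star V)) := by
        simp only [Matrix.mul_assoc]

/-- The matrix `J` built from the masses and the mutual cosines
`cos σ_ij = ⟪p_i, p_j⟫` has the same characteristic polynomial as the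
inertia tensor `I = Σ_k m_k (Id − p_k p_kᵀ)`, and hence is similar to it. -/
theorem J_similar_to_inertia_tensor
    (m : Fin 3 → ℝ) (hm : ∀ k, 0 < m k)
    (p : Fin 3 → Fin 3 → ℝ) (hp : ∀ k, p k ⬝ᵥ p k = 1)
    (I J : Matrix (Fin 3) (Fin 3) ℝ)
    (hI : I = ∑ k, m k •
      ((1 : Matrix (Fin 3) (Fin 3) ℝ) - Matrix.of fun a b => p k a * p k b))
    (hJ : J = !![m 1 + m 2, -Real.sqrt (m 0 * m 1) * (p 0 ⬝ᵥ p 1),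
                  -Real.sqrt (m 0 * m 2) * (p 0 ⬝ᵥ p 2);
                 -Real.sqrt (m 1 * m 0) * (p 1 ⬝ᵥ p 0), m 2 + m 0,
                  -Real.sqrt (m 1 * m 2) * (p 1 ⬝ᵥ p 2);
                 -Real.sqrt (m 2 * m 0) * (p 2 ⬝ᵥ p 0),
                  -Real.sqrt (m 2 * m 1) * (p 2 ⬝ᵥ p 1), m 0 + m 1]) :
    I.charpoly = J.charpoly ∧
    ∃ M : Matrix (Fin 3) (Fin 3) ℝ, IsUnit M.det ∧ J = M⁻¹ * I * M := by
  have h0 := Real.mul_self_sqrt (hm 0).le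
  have h1 := Real.mul_self_sqrt (hm 1).le
  have h2 := Real.mul_self_sqrt (hm 2).le
  have hs : ∀ i j : Fin 3, Real.sqrt (m i * m j) = Real.sqrt (m i) * Real.sqrt (m j) :=
    fun i j => Real.sqrt_mul (hm i).le _
  have hp0 := hp 0
  have hp1 := hp 1
  have hp2 := hp 2
  simp only [dotProduct, Fin.sum_univ_three] at hp0 hp1 hp2
  set A : Matrix (Fin 3) (Fin 3) ℝ := Matrix.of fun k j => Real.sqrt (m k) * p k j with hA
  have hI2 : I = (m 0 + m 1 + m 2) • (1 : Matrix (Fin 3) (Fin 3) ℝ) - Aᵀ * A := by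
    ext i j
    rw [hI]
    simp only [hA, Matrix.sum_apply, Matrix.sub_apply, Matrix.smul_apply, Matrix.mul_apply,
      Matrix.transpose_apply, Matrix.of_apply, Fin.sum_univ_three, smul_eq_mul]
    by_cases hij : i = j
    · subst hij
      simp only [Matrix.one_apply_eq]
      linear_combination (p 0 i * p 0 i) * h0 + (p 1 i * p 1 i) * h1 + (p 2 i * p 2 i) * h2
    · simp only [Matrix.one_apply_ne hij]
      linear_combination (p 0 i * p 0 j) * h0 + (p 1 i * p 1 j) * h1 + (p 2 i * p 2 j) * h2
  have hJ2 : J = (m 0 + m 1 + m 2) • (1 : Matrix (Fin 3) (Fin 3) ℝ) - A * Aᵀ := by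
    ext i j
    rw [hJ]
    fin_cases i <;> fin_cases j <;>
      simp only [hA, Fin.zero_eta, Fin.mk_one, show (⟨2, by omega⟩ : Fin 3) = 2 from rfl,
        Matrix.cons_val', Matrix.cons_val_zero, Matrix.cons_val_one, Matrix.head_cons,
        Matrix.head_fin_const, Matrix.empty_val', Matrix.cons_val_fin_one, Matrix.head_val',
        Matrix.of_apply, Matrix.cons_val_two, Matrix.tail_cons, Matrix.sub_apply,
        Matrix.smul_apply, Matrix.one_apply, Matrix.mul_apply, Matrix.transpose_apply,
        dotProduct, Fin.sum_univ_three, smul_eq_mul, hs] <;>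
      norm_num [Fin.ext_iff]
    · linear_combination (p 0 0 * p 0 0 + p 0 1 * p 0 1 + p 0 2 * p 0 2) * h0 + m 0 * hp0
    · ring
    · ring
    · ring
    · linear_combination (p 1 0 * p 1 0 + p 1 1 * p 1 1 + p 1 2 * p 1 2) * h1 + m 1 * hp1
    · ring
    · ring
    · ring
    · linear_combination (p 2 0 * p 2 0 + p 2 1 * p 2 1 + p 2 2 * p 2 2) * h2 + m 2 * hp2
  have hcp : I.charpoly = J.charpoly := by
    rw [hI2, hJ2, Matrix.charpoly, Matrix.charpoly, Matrix.det_fin_three,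
      Matrix.det_fin_three]
    simp only [Matrix.charmatrix_apply, Matrix.diagonal_apply, Matrix.sub_apply,
      Matrix.smul_apply, Matrix.one_apply, Matrix.mul_apply, Matrix.transpose_apply,
      Fin.sum_univ_three, smul_eq_mul]
    norm_num [Fin.ext_iff]
    ring
  refine ⟨hcp, ?_⟩
  have hAAt : (A * Aᵀ).IsHermitian := by
    have := Matrix.isHermitian_mul_conjTranspose_self A
    rwa [Matrix.conjTranspose_eq_transpose_of_trivial] at this
  have hAtA : (Aᵀ * A).IsHermitian := by
    have := Matrix.isHermitian_conjTranspose_mul_self A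
    rwa [Matrix.conjTranspose_eq_transpose_of_trivial] at this
  have hIh : I.IsHermitian := by
    rw [hI2]
    show _ᴴ = _
    rw [Matrix.conjTranspose_sub, Matrix.conjTranspose_smul, Matrix.conjTranspose_one,
      hAtA, star_trivial]
  have hJh : J.IsHermitian := by
    rw [hJ2]
    show _ᴴ = _
    rw [Matrix.conjTranspose_sub, Matrix.conjTranspose_smul, Matrix.conjTranspose_one,
      hAAt, star_trivial]
  exact similar_of_hermitian_of_charpoly_eq I J hIh hJh hcp
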